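/- Let A and B be positive semidefinite Hermitian operators on a finite-dimensional complex Hilbert space with ker(A) ∩ ker(B) = {0}. Then A + B has a positive smallest eigenvalue; quantitatively, if Π_A, Π_B denote the orthogonal projections onto ker(A) and ker(B), and a, b are the smallest nonzero eigenvalues of A and B respectively, then the smallest eigenvalue of A + B is at least min(a,b) · (1 − cos θ), where cos θ = max{|⟨u,v⟩| : u ∈ ker(A), v ∈ ker(B), ‖u‖ = ‖v‖ = 1}. -/

import Mathlib

open Matrix ComplexOrder

lemma kitaev_aux {N : ℕ} {A : Matrix (Fin N) (Fin N) ℂ} (hA : A.PosSemidef) {a : ℝ}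
    (haA : ∀ (μ : ℝ) (v : Fin N → ℂ), v ≠ 0 → A *ᵥ v = (μ : ℂ) • v → μ = 0 ∨ a ≤ μ)
    (ψ : Fin N → ℂ) (hψ : star ψ ⬝ᵥ ψ = 1) :
    ∃ (w : Fin N → ℂ) (s : ℝ), A *ᵥ w = 0 ∧ 0 ≤ s ∧ s ≤ 1 ∧
      star w ⬝ᵥ w = (s : ℂ) ∧ star w ⬝ᵥ ψ = (s : ℂ) ∧
      a * (1 - s) ≤ (star ψ ⬝ᵥ (A *ᵥ ψ)).re := by
  classical
  have hH := hA.1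
  set U : Matrix (Fin N) (Fin N) ℂ := (hH.eigenvectorUnitary : Matrix (Fin N) (Fin N) ℂ) with hUdef
  have hU1 : U * star U = 1 := mem_unitaryGroup_iff.mp hH.eigenvectorUnitary.2
  have hU2 : star U * U = 1 := mem_unitaryGroup_iff'.mp hH.eigenvectorUnitary.2
  set lam := hH.eigenvalues with hlam
  set φ : Fin N → ℂ := star U *ᵥ ψ with hφ
  have hφstar : star ψ ᵥ* U = star φ := by
    rw [hφ, star_mulVec, star_eq_conjTranspose, conjTranspose_conjTranspose]
  -- eigenvalue dichotomy
  have hev : ∀ i, lam i = 0 ∨ a ≤ lam i := by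
    intro i
    refine haA (lam i) (hH.eigenvectorBasis i) ?_ ?_
    · intro h
      exact hH.eigenvectorBasis.orthonormal.ne_zero i (by ext j; exact congrFun h j)
    · ext j
      have h2 := congrFun (hH.mulVec_eigenvectorBasis i) j
      simpa [Complex.real_smul] using h2
  have hev0 : ∀ i, 0 ≤ lam i := hA.eigenvalues_nonneg
  -- sum formulas
  set s : ℝ := ∑ i, if lam i = 0 then Complex.normSq (φ i) else 0 with hs
  have hterm : ∀ i ∈ Finset.univ, (0:ℝ) ≤ if lam i = 0 then Complex.normSq (φ i) else 0 := by
    intro i _; split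
    · exact Complex.normSq_nonneg _
    · exact le_refl 0
  have hs0 : 0 ≤ s := Finset.sum_nonneg hterm
  have hA_eq : A = U * diagonal (fun i => ((lam i : ℝ) : ℂ)) * star U := hH.spectral_theorem
  have hφnorm : star φ ⬝ᵥ φ = 1 := by
    have h1 : star ψ ⬝ᵥ ((U * star U) *ᵥ ψ) = star φ ⬝ᵥ φ := by
      rw [← mulVec_mulVec, dotProduct_mulVec, hφstar]
    rw [← h1, hU1, one_mulVec, hψ]
  have htotal : ∑ i, Complex.normSq (φ i) = 1 := by
    have h2 : star φ ⬝ᵥ φ = ((∑ i, Complex.normSq (φ i) : ℝ) : ℂ) := by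
      push_cast
      simp [dotProduct, Complex.normSq_eq_conj_mul_self]
    rw [h2] at hφnorm
    exact_mod_cast hφnorm
  have hs1 : s ≤ 1 := by
    rw [hs, ← htotal]
    refine Finset.sum_le_sum fun i _ => ?_
    split <;> simp [Complex.normSq_nonneg]
  have hAq : star ψ ⬝ᵥ (A *ᵥ ψ) = ((∑ i, lam i * Complex.normSq (φ i) : ℝ) : ℂ) := by
    conv_lhs => rw [hA_eq, ← mulVec_mulVec, ← mulVec_mulVec,
      dotProduct_mulVec, hφstar]
    push_cast
    simp only [dotProduct, mulVec_diagonal, Function.comp, Pi.star_apply]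
    refine Finset.sum_congr rfl fun i _ => ?_
    simp only [Complex.normSq_eq_conj_mul_self, RCLike.star_def, ← hφ]
    ring
  have hre : (star ψ ⬝ᵥ (A *ᵥ ψ)).re = ∑ i, lam i * Complex.normSq (φ i) := by
    rw [hAq, Complex.ofReal_re]
  have hsum2 : ∑ i, (if lam i = 0 then 0 else Complex.normSq (φ i)) = 1 - s := by
    have h3 : ∑ i, Complex.normSq (φ i)
        = s + ∑ i, (if lam i = 0 then 0 else Complex.normSq (φ i)) := by
      rw [hs, ← Finset.sum_add_distrib]
      refine Finset.sum_congr rfl fun i _ => ?_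
      split <;> simp
    rw [htotal] at h3
    linarith
  have hineq : a * (1 - s) ≤ ∑ i, lam i * Complex.normSq (φ i) := by
    rw [← hsum2, Finset.mul_sum]
    refine Finset.sum_le_sum fun i _ => ?_
    rcases hev i with h | h
    · simp [h]
    · split
      · next h0 => simp [h0, mul_comm]
      · next h0 =>
        have := Complex.normSq_nonneg (φ i)
        nlinarith
  set m : Fin N → ℂ := fun i => if lam i = 0 then φ i else 0 with hm
  have hmφ : star m ⬝ᵥ φ = ((s : ℝ) : ℂ) := by
    rw [hs]
    push_cast
    simp only [dotProduct, Pi.star_apply, hm]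
    refine Finset.sum_congr rfl fun i _ => ?_
    split
    · simp [Complex.normSq_eq_conj_mul_self, RCLike.star_def]
    · simp
  refine ⟨U *ᵥ m, s, ?_, hs0, hs1, ?_, ?_, ?_⟩
  · rw [mulVec_mulVec, hA_eq, mul_assoc, mul_assoc, hU2, mul_one,
      ← mulVec_mulVec]
    have hDm : diagonal (fun i => ((lam i : ℝ) : ℂ)) *ᵥ m = 0 := by
      ext i
      simp only [mulVec_diagonal, hm, Pi.zero_apply]
      split
      · next h0 => simp [h0]
      · simp
    rw [hDm, mulVec_zero]
  · rw [star_mulVec, dotProduct_mulVec, vecMul_vecMul, ← star_eq_conjTranspose, hU2,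
      vecMul_one]
    rw [hs]
    push_cast
    simp only [dotProduct, Pi.star_apply, hm]
    refine Finset.sum_congr rfl fun i _ => ?_
    split
    · simp [Complex.normSq_eq_conj_mul_self, RCLike.star_def]
    · simp
  · rw [star_mulVec, ← dotProduct_mulVec, ← star_eq_conjTranspose]
    exact hmφ
  · rw [hre]
    exact hineq

lemma cs_dot {N : ℕ} (u v : Fin N → ℂ) :
    ‖star u ⬝ᵥ v‖ ^ 2 ≤ (star u ⬝ᵥ u).re * (star v ⬝ᵥ v).re := by
  have inner_piLp_equiv_symm : ∀ x y : Fin N → ℂ, inner ℂ ((WithLp.equiv 2 (Fin N → ℂ)).symm x)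
      ((WithLp.equiv 2 (Fin N → ℂ)).symm y) = star x ⬝ᵥ y := fun x y => by
    rw [dotProduct_comm]; rfl
  have h1 := norm_inner_le_norm (𝕜 := ℂ) ((WithLp.equiv 2 (Fin N → ℂ)).symm u)
      ((WithLp.equiv 2 (Fin N → ℂ)).symm v)
  rw [inner_piLp_equiv_symm] at h1
  have h2 : (star u ⬝ᵥ u).re = ‖(WithLp.equiv 2 (Fin N → ℂ)).symm u‖ ^ 2 := by
    rw [← inner_piLp_equiv_symm, ← inner_self_eq_norm_sq (𝕜 := ℂ)]
    rfl
  have h3 : (star v ⬝ᵥ v).re = ‖(WithLp.equiv 2 (Fin N → ℂ)).symm v‖ ^ 2 := by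
    rw [← inner_piLp_equiv_symm, ← inner_self_eq_norm_sq (𝕜 := ℂ)]
    rfl
  rw [h2, h3]
  calc ‖star u ⬝ᵥ v‖ ^ 2 ≤ (‖(WithLp.equiv 2 (Fin N → ℂ)).symm u‖
      * ‖(WithLp.equiv 2 (Fin N → ℂ)).symm v‖) ^ 2 := by
        have := norm_nonneg (star u ⬝ᵥ v)
        nlinarith [norm_nonneg ((WithLp.equiv 2 (Fin N → ℂ)).symm u),
          norm_nonneg ((WithLp.equiv 2 (Fin N → ℂ)).symm v)]
    _ = _ := by ring

/-- Kitaev's geometric lemma: if `A, B` are PSD with trivially intersecting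
kernels, `a, b` are their smallest nonzero eigenvalues, and
`c = cos θ = sup{|⟨u,v⟩| : u ∈ ker A, v ∈ ker B unit vectors}`, then the
smallest eigenvalue of `A + B` is positive and at least `min(a,b)(1 − cos θ)`. -/
theorem stmt9 (N : ℕ) (A B : Matrix (Fin N) (Fin N) ℂ)
    (hA : A.PosSemidef) (hB : B.PosSemidef)
    (hker : ∀ v : Fin N → ℂ, A *ᵥ v = 0 → B *ᵥ v = 0 → v = 0)
    (a b : ℝ) (ha0 : 0 < a) (hb0 : 0 < b)
    (haA : ∀ (μ : ℝ) (v : Fin N → ℂ), v ≠ 0 → A *ᵥ v = (μ : ℂ) • v → μ = 0 ∨ a ≤ μ)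
    (haA' : ∃ v : Fin N → ℂ, v ≠ 0 ∧ A *ᵥ v = (a : ℂ) • v)
    (hbB : ∀ (μ : ℝ) (v : Fin N → ℂ), v ≠ 0 → B *ᵥ v = (μ : ℂ) • v → μ = 0 ∨ b ≤ μ)
    (hbB' : ∃ v : Fin N → ℂ, v ≠ 0 ∧ B *ᵥ v = (b : ℂ) • v)
    (c : ℝ)
    (hc : c = sSup {r : ℝ | ∃ u v : Fin N → ℂ, A *ᵥ u = 0 ∧ B *ᵥ v = 0 ∧
        star u ⬝ᵥ u = 1 ∧ star v ⬝ᵥ v = 1 ∧ ‖star u ⬝ᵥ v‖ = r}) :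
    (∀ ψ : Fin N → ℂ, star ψ ⬝ᵥ ψ = 1 →
        0 < (star ψ ⬝ᵥ ((A + B) *ᵥ ψ)).re) ∧
    (∀ ψ : Fin N → ℂ, star ψ ⬝ᵥ ψ = 1 →
        min a b * (1 - c) ≤ (star ψ ⬝ᵥ ((A + B) *ᵥ ψ)).re) := by
  set S : Set ℝ := {r : ℝ | ∃ u v : Fin N → ℂ, A *ᵥ u = 0 ∧ B *ᵥ v = 0 ∧
      star u ⬝ᵥ u = 1 ∧ star v ⬝ᵥ v = 1 ∧ ‖star u ⬝ᵥ v‖ = r} with hS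
  have hSb : ∀ r ∈ S, r ≤ 1 := by
    rintro r ⟨u, v, -, -, huu, hvv, habs⟩
    have h1 := cs_dot u v
    rw [huu, hvv, habs, Complex.one_re] at h1
    have h2 : 0 ≤ r := habs ▸ norm_nonneg _
    nlinarith
  have hBdd : BddAbove S := ⟨1, hSb⟩
  have hc0 : 0 ≤ c := by
    rcases Set.eq_empty_or_nonempty S with h | ⟨r, hr⟩
    · rw [hc, h, Real.sSup_empty]
    · have h2 : 0 ≤ r := by
        obtain ⟨u, v, -, -, -, -, habs⟩ := hr
        exact habs ▸ norm_nonneg _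
      have h3 : r ≤ c := hc ▸ le_csSup hBdd hr
      linarith
  have hsplit : ∀ ψ : Fin N → ℂ, star ψ ⬝ᵥ ((A + B) *ᵥ ψ)
      = star ψ ⬝ᵥ (A *ᵥ ψ) + star ψ ⬝ᵥ (B *ᵥ ψ) := by
    intro ψ; rw [add_mulVec, dotProduct_add]
  constructor
  · -- positivity
    intro ψ hψ
    have h0A := hA.dotProduct_mulVec_nonneg ψ
    have h0B := hB.dotProduct_mulVec_nonneg ψ
    rw [Complex.le_def] at h0A h0B
    simp only [Complex.zero_re, Complex.zero_im] at h0A h0B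
    rw [hsplit ψ, Complex.add_re]
    rcases lt_or_eq_of_le (add_nonneg h0A.1 h0B.1) with h | h
    · exact h
    · exfalso
      have hra : (star ψ ⬝ᵥ (A *ᵥ ψ)).re = 0 := by linarith [h0A.1, h0B.1]
      have hrb : (star ψ ⬝ᵥ (B *ᵥ ψ)).re = 0 := by linarith [h0A.1, h0B.1]
      have hza : star ψ ⬝ᵥ (A *ᵥ ψ) = 0 := Complex.ext hra (h0A.2.symm)
      have hzb : star ψ ⬝ᵥ (B *ᵥ ψ) = 0 := Complex.ext hrb (h0B.2.symm)
      have hψ0 : ψ = 0 := hker ψ ((hA.dotProduct_mulVec_zero_iff ψ).mp hza)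
        ((hB.dotProduct_mulVec_zero_iff ψ).mp hzb)
      rw [hψ0] at hψ
      simp at hψ
  · -- quantitative bound
    intro ψ hψ
    obtain ⟨wA, sA, hwA0, hsA0, hsA1, hwAw, hwAψ, hEA⟩ := kitaev_aux hA haA ψ hψ
    obtain ⟨wB, sB, hwB0, hsB0, hsB1, hwBw, hwBψ, hEB⟩ := kitaev_aux hB hbB ψ hψ
    -- key: sA + sB ≤ 1 + c
    have hkey : sA + sB ≤ 1 + c := by
      rcases eq_or_lt_of_le hsA0 with h | hsA0'
      · linarith
      rcases eq_or_lt_of_le hsB0 with h | hsB0'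
      · linarith
      -- both positive
      set rA := Real.sqrt sA with hrA
      set rB := Real.sqrt sB with hrB
      have hrA0 : 0 < rA := Real.sqrt_pos.mpr hsA0'
      have hrB0 : 0 < rB := Real.sqrt_pos.mpr hsB0'
      have hrA2 : rA ^ 2 = sA := Real.sq_sqrt hsA0'.le
      have hrB2 : rB ^ 2 = sB := Real.sq_sqrt hsB0'.le
      -- normalized vectors
      set u : Fin N → ℂ := ((rA⁻¹ : ℝ) : ℂ) • wA with hu
      set v : Fin N → ℂ := ((rB⁻¹ : ℝ) : ℂ) • wB with hv
      have huu : star u ⬝ᵥ u = 1 := by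
        rw [hu, star_smul, smul_dotProduct, dotProduct_smul, hwAw]
        simp only [star_trivial, RCLike.star_def, Complex.conj_ofReal, smul_eq_mul]
        norm_cast
        field_simp
        nlinarith
      have hvv : star v ⬝ᵥ v = 1 := by
        rw [hv, star_smul, smul_dotProduct, dotProduct_smul, hwBw]
        simp only [star_trivial, RCLike.star_def, Complex.conj_ofReal, smul_eq_mul]
        norm_cast
        field_simp
        nlinarith
      have hAu : A *ᵥ u = 0 := by rw [hu, mulVec_smul, hwA0, smul_zero]
      have hBv : B *ᵥ v = 0 := by rw [hv, mulVec_smul, hwB0, smul_zero]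
      have hmem : ‖star u ⬝ᵥ v‖ ∈ S := ⟨u, v, hAu, hBv, huu, hvv, rfl⟩
      have hle : ‖star u ⬝ᵥ v‖ ≤ c := hc ▸ le_csSup hBdd hmem
      have habs_uv : ‖star u ⬝ᵥ v‖
          = rA⁻¹ * rB⁻¹ * ‖star wA ⬝ᵥ wB‖ := by
        rw [hu, hv, star_smul, smul_dotProduct, dotProduct_smul]
        simp only [star_trivial, RCLike.star_def, Complex.conj_ofReal, smul_eq_mul]
        rw [norm_mul, norm_mul]
        simp [Complex.norm_real, Real.norm_eq_abs, abs_of_pos hrA0, abs_of_pos hrB0, mul_assoc]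
      have hdotAB : ‖star wA ⬝ᵥ wB‖ ≤ rA * rB * c := by
        have h1 : rA⁻¹ * rB⁻¹ * ‖star wA ⬝ᵥ wB‖ ≤ c := habs_uv ▸ hle
        have h2 : 0 < rA * rB := mul_pos hrA0 hrB0
        calc ‖star wA ⬝ᵥ wB‖
            = rA * rB * (rA⁻¹ * rB⁻¹ * ‖star wA ⬝ᵥ wB‖) := by
              field_simp
          _ ≤ rA * rB * c := by nlinarith
      -- Cauchy–Schwarz with x = wA + wB
      set x : Fin N → ℂ := wA + wB with hx
      have hxψ : star x ⬝ᵥ ψ = ((sA + sB : ℝ) : ℂ) := by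
        rw [hx, star_add, add_dotProduct, hwAψ, hwBψ]
        push_cast; ring
      have hxx : (star x ⬝ᵥ x).re = sA + sB + 2 * (star wA ⬝ᵥ wB).re := by
        rw [hx, star_add, add_dotProduct, dotProduct_add, dotProduct_add, hwAw, hwBw]
        have hconj : star wB ⬝ᵥ wA = star (star wA ⬝ᵥ wB) := by
          rw [star_dotProduct]
        rw [hconj]
        simp [Complex.add_re, Complex.conj_re]
        ring
      have hre_le : (star wA ⬝ᵥ wB).re ≤ rA * rB * c :=
        le_trans (Complex.re_le_norm _) hdotAB
      have hcs := cs_dot x ψ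
      rw [hψ, Complex.one_re, mul_one, hxψ] at hcs
      rw [Complex.norm_real, Real.norm_eq_abs] at hcs
      have hsum_pos : 0 < sA + sB := by linarith
      have habs_eq : |sA + sB| = sA + sB := abs_of_pos hsum_pos
      rw [habs_eq] at hcs
      -- (sA+sB)^2 ≤ re(x,x) ≤ (sA+sB)(1+c)
      have h2ab : 2 * (rA * rB) ≤ sA + sB := by
        have h := two_mul_le_add_sq rA rB
        rw [hrA2, hrB2] at h
        linarith
      have h3 : 2 * (rA * rB) * c ≤ (sA + sB) * c :=
        mul_le_mul_of_nonneg_right h2ab hc0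
      have h5 : (sA + sB) ^ 2 ≤ sA + sB + (sA + sB) * c := by
        linarith [hcs, hxx, hre_le, h3]
      have hsq : (sA + sB) * (sA + sB) ≤ (sA + sB) * (1 + c) := by
        have h6 : (sA + sB) * (sA + sB) = (sA + sB) ^ 2 := (pow_two _).symm
        rw [h6, mul_add, mul_one]
        exact h5
      exact le_of_mul_le_mul_left hsq hsum_pos
    -- conclude
    rw [hsplit ψ, Complex.add_re]
    have hm : min a b ≤ a := min_le_left a b
    have hm' : min a b ≤ b := min_le_right a b
    have hm0 : 0 < min a b := lt_min ha0 hb0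
    have e1 : min a b * (1 - sA) ≤ a * (1 - sA) :=
      mul_le_mul_of_nonneg_right hm (by linarith)
    have e2 : min a b * (1 - sB) ≤ b * (1 - sB) :=
      mul_le_mul_of_nonneg_right hm' (by linarith)
    have e3 : min a b * (1 - c) ≤ min a b * (1 - sA) + min a b * (1 - sB) := by
      have h4 := mul_le_mul_of_nonneg_left
        (show 1 - c ≤ (1 - sA) + (1 - sB) by linarith) hm0.le
      rw [mul_add] at h4
      exact h4
    linarith [e1, e2, e3, hEA, hEB]
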